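/- Under the Kähler cvc(1) package described in the context, let σ1, σ2 ⊆ V be orthogonal 2-dimensional subspaces, each invariant under both A and J, and let μ_i > 0 satisfy ‖Ax‖ = μ_i·‖x‖ for all x ∈ σ_i (i = 1,2). Let v_i ∈ σ_i be unit vectors and set v̄_i = Av_i/μ_i. If Jv1 = v̄1 then Jv2 = v̄2; if Jv1 = -v̄1 then Jv2 = -v̄2; and in both cases R(v2, v1, v̄1, v̄2) = 1. -/

import Mathlib

open scoped RealInnerProductSpace

private lemma basis2_expand {V : Type*} [NormedAddCommGroup V] [InnerProductSpace ℝ V]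
    [FiniteDimensional ℝ V] (σ : Submodule ℝ V) (hσ : Module.finrank ℝ σ = 2)
    {e f x : V} (he : e ∈ σ) (hf : f ∈ σ) (heu : ‖e‖ = 1) (hfu : ‖f‖ = 1)
    (hef : ⟪e, f⟫ = 0) (hx : x ∈ σ) : x = ⟪x, e⟫ • e + ⟪x, f⟫ • f := by
  by_contra hne
  set y := x - (⟪x, e⟫ • e + ⟪x, f⟫ • f) with hy
  have hee : ⟪e, e⟫ = 1 := by
    rw [real_inner_self_eq_norm_mul_norm, heu]; norm_num
  have hff : ⟪f, f⟫ = 1 := by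
    rw [real_inner_self_eq_norm_mul_norm, hfu]; norm_num
  have hfe : ⟪f, e⟫ = 0 := by rw [real_inner_comm]; exact hef
  have hye : ⟪y, e⟫ = 0 := by
    simp [hy, inner_sub_left, inner_add_left, real_inner_smul_left, hee, hfe, heu]
  have hyf : ⟪y, f⟫ = 0 := by
    simp [hy, inner_sub_left, inner_add_left, real_inner_smul_left, hff, hef, hfu]
  have hyσ : y ∈ σ := by
    exact Submodule.sub_mem σ hx (Submodule.add_mem σ (Submodule.smul_mem σ _ he)
      (Submodule.smul_mem σ _ hf))
  have hy0 : y ≠ 0 := fun h => hne (by rwa [hy, sub_eq_zero] at h)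
  have he0 : e ≠ 0 := fun h => by simp [h] at heu
  have hf0 : f ≠ 0 := fun h => by simp [h] at hfu
  have li : LinearIndependent ℝ (![⟨e, he⟩, ⟨f, hf⟩, ⟨y, hyσ⟩] : Fin 3 → σ) := by
    apply linearIndependent_of_ne_zero_of_inner_eq_zero
    · intro i; fin_cases i <;> simp [Submodule.mk_eq_zero, he0, hf0, hy0]
    · intro i j hij
      clear_value y
      clear hy
      fin_cases i <;> fin_cases j <;>
        simp_all [Submodule.coe_inner, real_inner_comm e f, real_inner_comm e y,
          real_inner_comm f y]
  have := li.fintype_card_le_finrank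
  simp [hσ] at this

set_option maxHeartbeats 2000000 in
/-- In the Kähler cvc(1) package, for orthogonal 2-dimensional subspaces
`σ1, σ2` invariant under both `A` and `J`, with `‖Ax‖ = μᵢ‖x‖` on `σᵢ`, unit vectors
`vᵢ ∈ σᵢ`, and `v̄ᵢ = Avᵢ/μᵢ`: if `Jv1 = v̄1` then `Jv2 = v̄2`; if `Jv1 = -v̄1` then
`Jv2 = -v̄2`; and in both cases `R(v2,v1,v̄1,v̄2) = 1`. -/
theorem stmt_14
    {V : Type*} [NormedAddCommGroup V] [InnerProductSpace ℝ V] [FiniteDimensional ℝ V]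
    (J : V →ₗ[ℝ] V)
    (hJiso : ∀ x y : V, ⟪J x, J y⟫ = ⟪x, y⟫)
    (hJ2 : ∀ x : V, J (J x) = -x)
    (R : V →ₗ[ℝ] V →ₗ[ℝ] V →ₗ[ℝ] V →ₗ[ℝ] ℝ)
    (hskew : ∀ X Y Z W : V, R X Y Z W = - R Y X Z W)
    (hpair : ∀ X Y Z W : V, R X Y Z W = R Z W X Y)
    (hbianchi : ∀ X Y Z W : V, R X Y Z W + R Y Z X W + R Z X Y W = 0)
    (hkahler : ∀ X Y Z W : V, R (J X) (J Y) Z W = R X Y Z W)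
    (hsec : ∀ x y : V, ‖x‖ = 1 → ‖y‖ = 1 → ⟪x, y⟫ = 0 → 1 ≤ R y x x y)
    (A : V →ₗ[ℝ] V) (hAinv : Function.Bijective A)
    (hAskew : ∀ x y : V, ⟪A x, y⟫ = -⟪x, A y⟫)
    (hE : ∀ v : V, ‖v‖ = 1 → ∀ w : V,
      (⟪w, v⟫ = 0 ∧ ∀ u : V, R w v v u = ⟪w, u⟫) ↔
        w ∈ (Submodule.span ℝ {v, A v})ᗮ)
    (σ1 σ2 : Submodule ℝ V)
    (hσ1 : Module.finrank ℝ σ1 = 2) (hσ2 : Module.finrank ℝ σ2 = 2)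
    (horth : ∀ x ∈ σ1, ∀ y ∈ σ2, ⟪x, y⟫ = 0)
    (hA1 : Submodule.map A σ1 = σ1) (hA2 : Submodule.map A σ2 = σ2)
    (hJ1 : Submodule.map J σ1 = σ1) (hJ2' : Submodule.map J σ2 = σ2)
    (μ1 μ2 : ℝ) (hμ1 : 0 < μ1) (hμ2 : 0 < μ2)
    (hAμ1 : ∀ x ∈ σ1, ‖A x‖ = μ1 * ‖x‖) (hAμ2 : ∀ x ∈ σ2, ‖A x‖ = μ2 * ‖x‖)
    (v1 : V) (hv1 : v1 ∈ σ1) (hv1u : ‖v1‖ = 1)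
    (v2 : V) (hv2 : v2 ∈ σ2) (hv2u : ‖v2‖ = 1)
    (vbar1 vbar2 : V) (hvbar1 : vbar1 = μ1⁻¹ • A v1) (hvbar2 : vbar2 = μ2⁻¹ • A v2) :
    (J v1 = vbar1 → J v2 = vbar2) ∧
    (J v1 = -vbar1 → J v2 = -vbar2) ∧
    ((J v1 = vbar1 ∨ J v1 = -vbar1) → R v2 v1 vbar1 vbar2 = 1) := by
  have rsym : ∀ x y : V, ⟪x, y⟫ = ⟪y, x⟫ := fun x y => real_inner_comm y x
  -- basic algebraic facts about A and the vbar's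
  have hAe1 : A v1 = μ1 • vbar1 := by
    rw [hvbar1, smul_smul, mul_inv_cancel₀ hμ1.ne', one_smul]
  have hAe2 : A v2 = μ2 • vbar2 := by
    rw [hvbar2, smul_smul, mul_inv_cancel₀ hμ2.ne', one_smul]
  have hf1σ : vbar1 ∈ σ1 := by
    rw [hvbar1]
    exact Submodule.smul_mem _ _ (hA1 ▸ Submodule.mem_map_of_mem hv1)
  have hf2σ : vbar2 ∈ σ2 := by
    rw [hvbar2]
    exact Submodule.smul_mem _ _ (hA2 ▸ Submodule.mem_map_of_mem hv2)
  have hAf1 : A vbar1 ∈ σ1 := hA1 ▸ Submodule.mem_map_of_mem hf1σ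
  have hAf2 : A vbar2 ∈ σ2 := hA2 ▸ Submodule.mem_map_of_mem hf2σ
  have hf1u : ‖vbar1‖ = 1 := by
    rw [hvbar1, norm_smul, hAμ1 v1 hv1, hv1u, mul_one, Real.norm_eq_abs,
      abs_of_pos (inv_pos.mpr hμ1), inv_mul_cancel₀ hμ1.ne']
  have hf2u : ‖vbar2‖ = 1 := by
    rw [hvbar2, norm_smul, hAμ2 v2 hv2, hv2u, mul_one, Real.norm_eq_abs,
      abs_of_pos (inv_pos.mpr hμ2), inv_mul_cancel₀ hμ2.ne']
  have hAvv : ∀ x : V, ⟪x, A x⟫ = 0 := by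
    intro x
    have h1 := hAskew x x
    have h2 := rsym (A x) x
    linarith
  have he1f1 : ⟪v1, vbar1⟫ = 0 := by
    rw [hvbar1, inner_smul_right, hAvv v1, mul_zero]
  have he2f2 : ⟪v2, vbar2⟫ = 0 := by
    rw [hvbar2, inner_smul_right, hAvv v2, mul_zero]
  have hf1e1 : ⟪vbar1, v1⟫ = 0 := by rw [rsym]; exact he1f1
  have hf2e2 : ⟪vbar2, v2⟫ = 0 := by rw [rsym]; exact he2f2
  have hf1f1 : ⟪vbar1, vbar1⟫ = 1 := by
    rw [real_inner_self_eq_norm_mul_norm, hf1u]; norm_num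
  have hf2f2 : ⟪vbar2, vbar2⟫ = 1 := by
    rw [real_inner_self_eq_norm_mul_norm, hf2u]; norm_num
  have horth' : ∀ y ∈ σ2, ∀ x ∈ σ1, ⟪y, x⟫ = 0 := fun y hy x hx => by
    rw [rsym]; exact horth x hx y hy
  have he1e2 : ⟪v1, v2⟫ = 0 := horth v1 hv1 v2 hv2
  have hf1e2 : ⟪vbar1, v2⟫ = 0 := horth vbar1 hf1σ v2 hv2
  have hf2e1 : ⟪vbar2, v1⟫ = 0 := horth' vbar2 hf2σ v1 hv1
  have hf1f2 : ⟪vbar1, vbar2⟫ = 0 := horth vbar1 hf1σ vbar2 hf2σ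
  have hf2f1 : ⟪vbar2, vbar1⟫ = 0 := horth' vbar2 hf2σ vbar1 hf1σ
  -- The E-space property in usable form
  have EA : ∀ v : V, ‖v‖ = 1 → ∀ w : V, ⟪w, v⟫ = 0 → ⟪w, A v⟫ = 0 →
      ∀ u, R w v v u = ⟪w, u⟫ := by
    intro v hv w hwv hwAv
    have hw : w ∈ (Submodule.span ℝ {v, A v})ᗮ := by
      rw [Submodule.mem_orthogonal]
      intro u hu
      induction hu using Submodule.span_induction with
      | mem x hx =>
        rcases hx with rfl | hx
        · rw [rsym]; exact hwv
        · rw [Set.mem_singleton_iff] at hx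
          subst hx; rw [rsym]; exact hwAv
      | zero => simp
      | add x y hx hy ihx ihy => simp [inner_add_left, ihx, ihy]
      | smul a x hx ihx => simp [real_inner_smul_left, ihx]
    exact ((hE v hv w).mpr hw).2
  -- E-instances across the two blocks
  have E1 : ∀ w ∈ σ2, ∀ v ∈ σ1, ‖v‖ = 1 → ∀ u, R w v v u = ⟪w, u⟫ := by
    intro w hw v hvσ hvu
    exact EA v hvu w (horth' w hw v hvσ)
      (horth' w hw (A v) (hA1 ▸ Submodule.mem_map_of_mem hvσ))
  have E2 : ∀ w ∈ σ1, ∀ v ∈ σ2, ‖v‖ = 1 → ∀ u, R w v v u = ⟪w, u⟫ := by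
    intro w hw v hvσ hvu
    exact EA v hvu w (horth w hw v hvσ)
      (horth w hw (A v) (hA2 ▸ Submodule.mem_map_of_mem hvσ))
  -- derived symmetries
  have hskew2 : ∀ X Y Z W : V, R X Y Z W = - R X Y W Z := by
    intro X Y Z W
    rw [hpair X Y Z W, hskew Z W X Y, hpair W Z X Y]
  have hzz : ∀ X Y Z : V, R X Y Z Z = 0 := by
    intro X Y Z
    have := hskew2 X Y Z Z
    linarith
  have hWZYX : ∀ X Y Z W : V, R X Y Z W = R W Z Y X := by
    intro X Y Z W
    have h1 := hpair X Y Z W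
    have h2 := hskew Z W X Y
    have h3 := hskew2 W Z X Y
    linarith
  -- the two-plane exchange lemma
  have LB : ∀ x y w : V, ‖x‖ = 1 → ‖y‖ = 1 → ⟪x, y⟫ = 0 → ⟪w, x⟫ = 0 → ⟪w, y⟫ = 0 →
      ⟪w, A x⟫ = 0 → ⟪w, A y⟫ = 0 →
      (∀ u, R w y x u = - R w x y u) ∧ (∀ u, R y x w u = 2 * R w x y u) := by
    intro x y w hx hy hxy hwx hwy hwAx hwAy
    have hEx := EA x hx w hwx hwAx
    have hEy := EA y hy w hwy hwAy
    have hn : ‖x + y‖ ^ 2 = 2 := by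
      rw [norm_add_sq_real, hx, hy, hxy]; norm_num
    have hn0 : ‖x + y‖ ≠ 0 := by
      intro h; rw [h] at hn; norm_num at hn
    set z := ‖x + y‖⁻¹ • (x + y) with hzdef
    have hzu : ‖z‖ = 1 := by
      rw [hzdef, norm_smul, Real.norm_eq_abs, abs_of_nonneg (inv_nonneg.mpr (norm_nonneg _)),
        inv_mul_cancel₀ hn0]
    have hwz : ⟪w, z⟫ = 0 := by
      rw [hzdef, inner_smul_right, inner_add_right, hwx, hwy]; ring
    have hwAz : ⟪w, A z⟫ = 0 := by
      rw [hzdef, map_smul, inner_smul_right, map_add, inner_add_right, hwAx, hwAy]; ring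
    have hEz := EA z hzu w hwz hwAz
    have hsum : x + y = ‖x + y‖ • z := by
      rw [hzdef, smul_smul, mul_inv_cancel₀ hn0, one_smul]
    have key : ∀ u, R w x y u + R w y x u = 0 := by
      intro u
      have hexp : R w (x + y) (x + y) u = ‖x + y‖ ^ 2 * R w z z u := by
        conv_lhs => rw [hsum]
        simp only [map_smul, LinearMap.smul_apply, smul_eq_mul]
        ring
      rw [hEz u] at hexp
      have hexp2 : R w (x + y) (x + y) u =
          R w x x u + R w x y u + R w y x u + R w y y u := by
        simp only [map_add, LinearMap.add_apply]
        ring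
      rw [hexp2, hEx u, hEy u, hn] at hexp
      linarith [hexp]
    constructor
    · intro u; linarith [key u]
    · intro u
      have hb := hbianchi w x y u
      have h1 := hskew y w x u
      have h2 := hskew y x w u
      linarith [key u]
  -- instances of LB
  have B1 : ∀ w ∈ σ2, (∀ u, R w vbar1 v1 u = - R w v1 vbar1 u) ∧
      (∀ u, R vbar1 v1 w u = 2 * R w v1 vbar1 u) := by
    intro w hw
    exact LB v1 vbar1 w hv1u hf1u he1f1 (horth' w hw v1 hv1) (horth' w hw vbar1 hf1σ)
      (horth' w hw (A v1) (hA1 ▸ Submodule.mem_map_of_mem hv1)) (horth' w hw (A vbar1) hAf1)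
  have hB1v2 := B1 v2 hv2
  have hB1f2 := B1 vbar2 hf2σ
  -- atomic curvature values
  have A2 : R vbar1 v1 v2 vbar1 = 0 := by
    rw [hB1v2.2 vbar1, hzz v2 v1 vbar1, mul_zero]
  have A3 : R vbar1 v2 v1 vbar1 = 0 := by
    rw [hWZYX vbar1 v2 v1 vbar1]; exact A2
  have A4 : R vbar1 v2 v2 vbar1 = 1 := by
    rw [E2 vbar1 hf1σ v2 hv2 hv2u vbar1, hf1f1]
  have A5 : R vbar2 v1 v1 vbar1 = 0 := by
    rw [E1 vbar2 hf2σ v1 hv1 hv1u vbar1]; exact hf2f1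
  have A7' : R vbar1 v1 v2 vbar2 = 2 * R v2 v1 vbar1 vbar2 := hB1v2.2 vbar2
  have A6 : R vbar2 v1 v2 vbar1 = R v2 v1 vbar1 vbar2 := by
    have h1 := hskew2 vbar2 v1 v2 vbar1
    have h2 := hB1f2.2 v2
    have h3 := hskew2 vbar1 v1 vbar2 v2
    linarith [A7']
  have A7 : R vbar2 v2 v1 vbar1 = 2 * R v2 v1 vbar1 vbar2 := by
    rw [hWZYX vbar2 v2 v1 vbar1]; exact A7'
  have A8 : R vbar2 v2 v2 vbar1 = 0 := by
    rw [hWZYX vbar2 v2 v2 vbar1, E2 vbar1 hf1σ v2 hv2 hv2u vbar2]; exact hf1f2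
  have hK1 : 1 ≤ R vbar1 v1 v1 vbar1 := hsec v1 vbar1 hv1u hf1u he1f1
  -- the diagonal E-space computation: 3 μ1 T = μ2 (K1 - 1), forcing T ≥ 0
  have hTnn : 0 ≤ R v2 v1 vbar1 vbar2 := by
    set p := v1 + v2 with hp
    set w0 := μ2 • vbar1 - μ1 • vbar2 with hw0
    have hp2 : ‖p‖ ^ 2 = 2 := by
      rw [hp, norm_add_sq_real, hv1u, hv2u, he1e2]; norm_num
    have hp0 : ‖p‖ ≠ 0 := by
      intro h; rw [h] at hp2; norm_num at hp2
    have hvu : ‖‖p‖⁻¹ • p‖ = 1 := by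
      rw [norm_smul, Real.norm_eq_abs, abs_of_nonneg (inv_nonneg.mpr (norm_nonneg _)),
        inv_mul_cancel₀ hp0]
    have hw0p : ⟪w0, p⟫ = 0 := by
      rw [hw0, hp]
      simp only [inner_sub_left, inner_add_right, real_inner_smul_left]
      rw [hf1e1, hf1e2, hf2e1, hf2e2]; ring
    have hw0Ap : ⟪w0, A p⟫ = 0 := by
      rw [hw0, hp, map_add, hAe1, hAe2]
      simp only [inner_sub_left, inner_add_right, inner_smul_right, real_inner_smul_left]
      rw [hf1f1, hf1f2, hf2f1, hf2f2]; ring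
    have hw0z : ⟪w0, ‖p‖⁻¹ • p⟫ = 0 := by
      rw [inner_smul_right, hw0p, mul_zero]
    have hw0Az : ⟪w0, A (‖p‖⁻¹ • p)⟫ = 0 := by
      rw [map_smul, inner_smul_right, hw0Ap, mul_zero]
    have hEb := EA (‖p‖⁻¹ • p) hvu w0 hw0z hw0Az
    have hsump : p = ‖p‖ • (‖p‖⁻¹ • p) := by
      rw [smul_smul, mul_inv_cancel₀ hp0, one_smul]
    have hbig : R w0 p p vbar1 = 2 * ⟪w0, vbar1⟫ := by
      have hexp : R w0 p p vbar1 =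
          ‖p‖ ^ 2 * R w0 (‖p‖⁻¹ • p) (‖p‖⁻¹ • p) vbar1 := by
        conv_lhs => rw [hsump]
        simp only [map_smul, LinearMap.smul_apply, smul_eq_mul]
        ring
      rw [hexp, hEb vbar1, hp2]
    have hexpand : R w0 p p vbar1 =
        μ2 * (R vbar1 v1 v1 vbar1 + R vbar1 v1 v2 vbar1 + R vbar1 v2 v1 vbar1 +
          R vbar1 v2 v2 vbar1) -
        μ1 * (R vbar2 v1 v1 vbar1 + R vbar2 v1 v2 vbar1 + R vbar2 v2 v1 vbar1 +
          R vbar2 v2 v2 vbar1) := by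
      rw [hw0, hp, sub_eq_add_neg (μ2 • vbar1), ← neg_smul]
      simp only [map_add, map_sub, map_smul, LinearMap.add_apply, LinearMap.sub_apply,
        LinearMap.smul_apply, smul_eq_mul]
      ring
    have hwin : ⟪w0, vbar1⟫ = μ2 := by
      rw [hw0]
      simp only [inner_sub_left, real_inner_smul_left]
      rw [hf1f1, hf2f1]; ring
    rw [hexpand, hwin] at hbig
    rw [A2, A3, A4, A5, A6, A7, A8] at hbig
    -- hbig : μ2 * (K1 + 0 + 0 + 1) - μ1 * (0 + T + 2T + 0) = 2 μ2
    nlinarith [hbig, mul_nonneg hμ2.le (sub_nonneg.mpr hK1), hμ1]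
  -- the J-rotation of v2 within σ2
  have hJ2m : J v2 ∈ σ2 := hJ2' ▸ Submodule.mem_map_of_mem hv2
  have hJv2self : ⟪J v2, J v2⟫ = 1 := by
    rw [hJiso v2 v2, real_inner_self_eq_norm_mul_norm, hv2u]; norm_num
  have hJv2e2 : ⟪J v2, v2⟫ = 0 := by
    have h1 := hJiso (J v2) v2
    rw [hJ2 v2, inner_neg_left] at h1
    have h2 := rsym v2 (J v2)
    linarith
  have hJv2 : J v2 = ⟪J v2, vbar2⟫ • vbar2 := by
    have h := basis2_expand σ2 hσ2 hv2 hf2σ hv2u hf2u he2f2 hJ2m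
    rw [hJv2e2, zero_smul, zero_add] at h
    exact h
  set δ := ⟪J v2, vbar2⟫ with hδdef
  have hδ2 : δ * δ = 1 := by
    have h := hJv2self
    conv_lhs at h => rw [hJv2]
    rw [real_inner_smul_left, inner_smul_right, hf2f2] at h
    linarith
  -- curvature value for the Kähler computation
  have hval : R vbar2 vbar1 vbar1 vbar2 = 1 := by
    rw [E1 vbar2 hf2σ vbar1 hf1σ hf1u vbar2, hf2f2]
  -- the main branch computation
  have key : ∀ ε : ℝ, ε * ε = 1 → J v1 = ε • vbar1 →
      J v2 = ε • vbar2 ∧ R v2 v1 vbar1 vbar2 = 1 := by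
    intro ε hε hJv1
    have hk := hkahler v2 v1 vbar1 vbar2
    rw [hJv1] at hk
    conv_lhs at hk => rw [hJv2]
    simp only [map_smul, LinearMap.smul_apply, smul_eq_mul] at hk
    rw [hval] at hk
    -- hk : δ * (ε * 1) = R v2 v1 vbar1 vbar2
    have hT2 : R v2 v1 vbar1 vbar2 * R v2 v1 vbar1 vbar2 = 1 := by
      nlinarith [hk, hδ2, hε]
    have hT1 : R v2 v1 vbar1 vbar2 = 1 := by
      nlinarith [hT2, hTnn]
    have hδε : δ = ε := by
      have hde : δ * ε = 1 := by nlinarith [hk, hT1]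
      nlinarith [hde, hε]
    refine ⟨?_, hT1⟩
    rw [hJv2, hδε]
  refine ⟨?_, ?_, ?_⟩
  · intro h
    have := (key 1 (by norm_num) (by rw [one_smul]; exact h)).1
    rwa [one_smul] at this
  · intro h
    have := (key (-1) (by norm_num) (by rw [neg_one_smul]; exact h)).1
    rwa [neg_one_smul] at this
  · rintro (h | h)
    · exact (key 1 (by norm_num) (by rw [one_smul]; exact h)).2
    · exact (key (-1) (by norm_num) (by rw [neg_one_smul]; exact h)).2
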